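/- Let μ ∈ ℂ with μ ≠ 0 and let x be a Floquet solution of the transposed system with multiplier μ. Define v = (v_1, …, v_N) ∈ (ℂ^d)^N by v_n = x((N − n)Δ) for n = 1, …, N. Then v ≠ 0 and M(μ)v = 0; that is, every differentiable p : [0,1] → (ℂ^d)^N with p'(s) = −A(s, μ)ᵀ p(s) on [0,1] and p(1) = v satisfies p(0) = B(μ)ᵀ v. (Forward direction of Theorem 4.3: eigenfunctions of the monodromy operator of the transposed delay system yield eigenvectors of the transposed nonlinear eigenvalue problem.) -/

import Mathlib

open scoped BigOperators
open Set

noncomputable section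

/-- `aExp N k = ⌊(k-1)/N⌋` (floor division). -/
def aExp (N : ℕ) (k : ℤ) : ℤ := Int.fdiv (k - 1) (N : ℤ)

/-- `bIdx N hN k` is the `Fin N` index (zero-based) corresponding to the
paper index `b_k = ((k-1) mod N) + 1 ∈ {1,…,N}`. -/
def bIdx (N : ℕ) (hN : 0 < N) (k : ℤ) : Fin N :=
  ⟨((k - 1) % (N : ℤ)).toNat, by
    have hN' : (0:ℤ) < (N:ℤ) := by exact_mod_cast hN
    have h1 : 0 ≤ (k - 1) % (N : ℤ) := Int.emod_nonneg _ (ne_of_gt hN')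
    have h2 : (k - 1) % (N : ℤ) < (N : ℤ) := Int.emod_lt_of_pos _ hN'
    omega⟩

/-- The block linear map `A(s,μ)` acting on `(ℂ^d)^N`:
`(A(s,μ)q)_n = Δ Σ_j A_j((s+n-1)Δ) μ^{a_{n-n_j}} q_{b_{n-n_j}}` (paper indices `n = 1,…,N`). -/
def Aop (d h N : ℕ) (hN : 0 < N) (Δ : ℝ)
    (A : Fin (h+1) → ℝ → Matrix (Fin d) (Fin d) ℝ) (nn : Fin (h+1) → ℕ)
    (s : ℝ) (μ : ℂ) (q : Fin N → Fin d → ℂ) : Fin N → Fin d → ℂ :=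
  fun n i => (Δ : ℂ) * ∑ j : Fin (h+1),
    μ ^ aExp N (((n : ℕ) : ℤ) + 1 - (nn j : ℤ)) *
      ∑ i' : Fin d, ((A j ((s + ((n : ℕ) : ℝ)) * Δ)) i i' : ℂ) *
        q (bIdx N hN (((n : ℕ) : ℤ) + 1 - (nn j : ℤ))) i'

/-- The linear map `B(μ)` on `(ℂ^d)^N`:
`(B(μ)q)_n = q_{n+1}` for `n = 1,…,N-1` and `(B(μ)q)_N = μ q_1`. -/
def Bop (d N : ℕ) (hN : 0 < N) (μ : ℂ) (q : Fin N → Fin d → ℂ) : Fin N → Fin d → ℂ :=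
  fun n i => if hn : (n : ℕ) + 1 < N then q ⟨(n : ℕ) + 1, hn⟩ i else μ * q ⟨0, hN⟩ i

/-- The transpose (without conjugation) `A(s,μ)ᵀ` of the block map `A(s,μ)`,
acting on `p ∈ (ℂ^d)^N`. -/
def AopT (d h N : ℕ) (hN : 0 < N) (Δ : ℝ)
    (A : Fin (h+1) → ℝ → Matrix (Fin d) (Fin d) ℝ) (nn : Fin (h+1) → ℕ)
    (s : ℝ) (μ : ℂ) (p : Fin N → Fin d → ℂ) : Fin N → Fin d → ℂ :=
  fun n i => (Δ : ℂ) * ∑ m : Fin N, ∑ j : Fin (h+1),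
    if n = bIdx N hN (((m : ℕ) : ℤ) + 1 - (nn j : ℤ)) then
      μ ^ aExp N (((m : ℕ) : ℤ) + 1 - (nn j : ℤ)) *
        ∑ i' : Fin d, ((A j ((s + ((m : ℕ) : ℝ)) * Δ)) i' i : ℂ) * p m i'
    else 0

/-- The transpose `B(μ)ᵀ` of `B(μ)`:
`(B(μ)ᵀ v)_1 = μ v_N` and `(B(μ)ᵀ v)_n = v_{n-1}` for `n = 2,…,N`. -/
def BopT (d N : ℕ) (hN : 0 < N) (μ : ℂ) (v : Fin N → Fin d → ℂ) : Fin N → Fin d → ℂ :=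
  fun n i => if hn : 0 < (n : ℕ) then
      v ⟨(n : ℕ) - 1, by have := n.isLt; omega⟩ i
    else μ * v ⟨N - 1, by omega⟩ i

/-- A Floquet solution of the transposed periodic delay system
`x'(t) = Σ_j A_j(-t + τ_j)ᵀ x(t - τ_j)` (with `τ_j = n_j Δ`) with multiplier `μ`. -/
def IsFloquetSolutionT (d h : ℕ) (A : Fin (h+1) → ℝ → Matrix (Fin d) (Fin d) ℝ)
    (nn : Fin (h+1) → ℕ) (Δ T : ℝ) (μ : ℂ) (x : ℝ → Fin d → ℂ) : Prop :=
  (∃ t, x t ≠ 0) ∧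
  (∀ t : ℝ, HasDerivAt x (fun i => ∑ j : Fin (h+1), ∑ i' : Fin d,
      ((A j (-t + (nn j : ℝ) * Δ)) i' i : ℂ) * x (t - (nn j : ℝ) * Δ) i') t) ∧
  (∀ t : ℝ, x (t + T) = fun i => μ * x t i)

lemma bIdx_eq_iff {N : ℕ} (hN : 0 < N) (k : ℤ) (n : Fin N) :
    bIdx N hN k = n ↔ (k - 1) % (N : ℤ) = ((n : ℕ) : ℤ) := by
  have hN' : (0:ℤ) < (N:ℤ) := by exact_mod_cast hN
  have h1 : 0 ≤ (k - 1) % (N : ℤ) := Int.emod_nonneg _ (ne_of_gt hN')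
  rw [Fin.ext_iff]
  show ((k - 1) % (N : ℤ)).toNat = (n : ℕ) ↔ _
  omega

lemma bIdx_hit {N : ℕ} (hN : 0 < N) (b n₀ : ℕ) (hn₀ : n₀ < N) :
    bIdx N hN (((((n₀ + b) % N : ℕ) : ℤ)) + 1 - (b : ℤ)) = ⟨n₀, hn₀⟩ := by
  rw [bIdx_eq_iff]
  have hcast : (((n₀ + b) % N : ℕ) : ℤ) = ((n₀ : ℤ) + b) % (N : ℤ) := by
    push_cast; ring_nf
  have hN' : (0:ℤ) < (N:ℤ) := by exact_mod_cast hN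
  rw [hcast]
  have h2 : ((n₀ : ℤ) + b) % N + 1 - b - 1 = ((n₀:ℤ) + b) % N - b := by ring
  rw [h2, Int.sub_emod, Int.emod_emod_of_dvd _ dvd_rfl, ← Int.sub_emod]
  have h3 : (n₀ : ℤ) + b - b = n₀ := by ring
  rw [h3, Int.emod_eq_of_lt (by positivity) (by exact_mod_cast hn₀)]

lemma bIdx_miss {N : ℕ} (hN : 0 < N) (b n₀ : ℕ) (hn₀ : n₀ < N) (m : Fin N)
    (hm : m ≠ (⟨(n₀ + b) % N, Nat.mod_lt _ hN⟩ : Fin N)) :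
    (⟨n₀, hn₀⟩ : Fin N) ≠ bIdx N hN (((m : ℕ) : ℤ) + 1 - (b : ℤ)) := by
  intro hcontra
  apply hm
  have hthis := (bIdx_eq_iff hN _ _).mp hcontra.symm
  have hN' : (0:ℤ) < (N:ℤ) := by exact_mod_cast hN
  have h2 : ((m : ℕ) : ℤ) + 1 - (b:ℤ) - 1 = ((m:ℕ):ℤ) - b := by ring
  rw [h2] at hthis
  have h3 : (((m:ℕ):ℤ) - b) % N = ((n₀:ℤ)) % N := by
    rw [hthis]
    show ((n₀ : ℕ) : ℤ) = _
    rw [Int.emod_eq_of_lt (by positivity) (by exact_mod_cast hn₀)]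
  have h4 : ((m:ℕ):ℤ) % N = ((n₀:ℤ) + b) % N := by
    have := Int.ModEq.add_right (b:ℤ) h3
    simp at this
    exact this
  have h5 : ((m:ℕ):ℤ) = ((n₀:ℤ)+b) % N := by
    rw [← h4, Int.emod_eq_of_lt (by positivity) (by exact_mod_cast m.isLt)]
  apply Fin.ext
  show (m:ℕ) = (n₀ + b) % N
  have h6 : (((n₀ + b) % N : ℕ) : ℤ) = ((n₀ : ℤ) + b) % (N : ℤ) := by push_cast; ring_nf
  omega

lemma aExp_hit {N : ℕ} (hN : 0 < N) (b n₀ : ℕ) (hn₀ : n₀ < N) :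
    aExp N (((((n₀ + b) % N : ℕ) : ℤ)) + 1 - (b : ℤ)) = -(((n₀ + b) / N : ℕ) : ℤ) := by
  unfold aExp
  have hN' : (0:ℤ) < (N:ℤ) := by exact_mod_cast hN
  rw [Int.fdiv_eq_ediv, if_pos (Or.inl (le_of_lt hN')), sub_zero]
  have hmd : (((n₀ + b) % N : ℕ) : ℤ) + ((N:ℤ)) * (((n₀ + b) / N : ℕ) : ℤ) = (n₀ : ℤ) + b := by
    exact_mod_cast congrArg (fun z : ℕ => (z : ℤ)) (Nat.mod_add_div (n₀ + b) N)
  set c : ℤ := (((n₀ + b) / N : ℕ) : ℤ)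
  have harg : (((n₀ + b) % N : ℕ) : ℤ) + 1 - (b:ℤ) - 1 = (n₀ : ℤ) + (-c) * N := by
    linarith [hmd]
  rw [harg, Int.add_mul_ediv_right _ _ (ne_of_gt hN'),
    Int.ediv_eq_zero_of_lt (by positivity) (by exact_mod_cast hn₀)]
  ring

lemma AopT_collapse (d h N : ℕ) (hN : 0 < N) (Δ : ℝ)
    (A : Fin (h+1) → ℝ → Matrix (Fin d) (Fin d) ℝ) (nn : Fin (h+1) → ℕ)
    (s : ℝ) (μ : ℂ) (q : Fin N → Fin d → ℂ) (n : Fin N) (i : Fin d) :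
    AopT d h N hN Δ A nn s μ q n i
      = (Δ : ℂ) * ∑ j : Fin (h+1),
          μ ^ (-(((((n:ℕ) + nn j) / N : ℕ)) : ℤ)) *
          ∑ i' : Fin d,
            ((A j ((s + ((((n:ℕ) + nn j) % N : ℕ) : ℝ)) * Δ)) i' i : ℂ) *
              q ⟨((n:ℕ) + nn j) % N, Nat.mod_lt _ hN⟩ i' := by
  unfold AopT
  rw [Finset.sum_comm]
  congr 1
  refine Finset.sum_congr rfl (fun j _ => ?_)
  rw [Finset.sum_eq_single_of_mem (⟨((n:ℕ) + nn j) % N, Nat.mod_lt _ hN⟩ : Fin N)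
    (Finset.mem_univ _)]
  · rw [if_pos]
    · congr 1
      exact congrArg (fun z => μ ^ z) (aExp_hit hN (nn j) (n:ℕ) n.isLt)
    · exact (Fin.eta n n.isLt) ▸ (bIdx_hit hN (nn j) (n:ℕ) n.isLt).symm
  · intro m _ hm
    rw [if_neg]
    exact (Fin.eta n n.isLt) ▸ bIdx_miss hN (nn j) (n:ℕ) n.isLt m hm

lemma floquet_pow {d : ℕ} {T : ℝ} {μ : ℂ} {x : ℝ → Fin d → ℂ}
    (hfl : ∀ t, x (t + T) = fun i => μ * x t i) (m : ℕ) (t : ℝ) (i : Fin d) :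
    x (t + (m : ℝ) * T) i = μ ^ m * x t i := by
  induction m generalizing t with
  | zero => simp
  | succ m ih =>
    have h1 : t + ((m+1 : ℕ) : ℝ) * T = (t + (m:ℝ) * T) + T := by push_cast; ring
    rw [h1, hfl]
    simp only [ih]
    ring

lemma floquet_zpow {d : ℕ} {T : ℝ} {μ : ℂ} (hμ : μ ≠ 0) {x : ℝ → Fin d → ℂ}
    (hfl : ∀ t, x (t + T) = fun i => μ * x t i) (k : ℤ) (t : ℝ) (i : Fin d) :
    x (t + (k : ℝ) * T) i = μ ^ k * x t i := by
  obtain ⟨m, rfl | rfl⟩ := k.eq_nat_or_neg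
  · rw [zpow_natCast]
    exact_mod_cast floquet_pow hfl m t i
  · have h1 := floquet_pow hfl m (t + ((-(m:ℤ) : ℤ) : ℝ) * T) i
    have h2 : (t + ((-(m:ℤ) : ℤ) : ℝ) * T) + (m : ℝ) * T = t := by push_cast; ring
    rw [h2] at h1
    have h3 : μ ^ (-(m:ℤ)) = (μ ^ m)⁻¹ := by
      rw [zpow_neg, zpow_natCast]
    rw [h3, eq_comm, inv_mul_eq_iff_eq_mul₀ (pow_ne_zero _ hμ), h1]

lemma periodic_zsmul {α : Type*} {f : ℝ → α} {T : ℝ}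
    (hf : ∀ t, f (t + T) = f t) (k : ℤ) (t : ℝ) : f (t + (k : ℝ) * T) = f t := by
  have hp : Function.Periodic f T := hf
  exact (hp.int_mul k) t

lemma q_hasDerivAt (d h N : ℕ) (hN : 0 < N) (Δ : ℝ)
    (A : Fin (h+1) → ℝ → Matrix (Fin d) (Fin d) ℝ)
    (hper : ∀ j t, A j (t + (N : ℝ) * Δ) = A j t)
    (nn : Fin (h+1) → ℕ) (μ : ℂ) (hμ : μ ≠ 0)
    (x : ℝ → Fin d → ℂ)
    (hx' : ∀ t : ℝ, HasDerivAt x (fun i => ∑ j : Fin (h+1), ∑ i' : Fin d,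
      ((A j (-t + (nn j : ℝ) * Δ)) i' i : ℂ) * x (t - (nn j : ℝ) * Δ) i') t)
    (hfl : ∀ t : ℝ, x (t + (N : ℝ) * Δ) = fun i => μ * x t i)
    (s : ℝ) :
    HasDerivAt (fun s (n : Fin N) (i : Fin d) => x (((N:ℝ) - ((n:ℕ):ℝ) - s) * Δ) i)
      (fun n i => -(AopT d h N hN Δ A nn s μ
        (fun n i => x (((N:ℝ) - ((n:ℕ):ℝ) - s) * Δ) i) n i)) s := by
  rw [hasDerivAt_pi]
  intro n
  rw [hasDerivAt_pi]
  intro i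
  set t0 : ℝ := ((N:ℝ) - ((n:ℕ):ℝ) - s) * Δ with ht0
  have hu : HasDerivAt (fun s : ℝ => ((N:ℝ) - ((n:ℕ):ℝ) - s) * Δ) (-Δ) s := by
    simpa using (((hasDerivAt_id s).const_sub ((N:ℝ) - ((n:ℕ):ℝ))).mul_const Δ)
  have hxi : HasDerivAt (fun t => x t i)
      (∑ j : Fin (h+1), ∑ i' : Fin d,
        ((A j (-t0 + (nn j : ℝ) * Δ)) i' i : ℂ) * x (t0 - (nn j : ℝ) * Δ) i') t0 :=
    hasDerivAt_pi.mp (hx' t0) i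
  have hcomp := HasDerivAt.scomp (𝕜 := ℝ) s hxi hu
  convert hcomp using 1
  · rfl
  rw [AopT_collapse, Complex.real_smul, Complex.ofReal_neg, neg_mul, neg_inj]
  congr 1
  refine Finset.sum_congr rfl (fun j _ => ?_)
  have hmd := Nat.mod_add_div ((n:ℕ) + nn j) N
  have hmr : ((((n:ℕ) + nn j) % N : ℕ) : ℝ) + (N:ℝ) * ((((n:ℕ) + nn j) / N : ℕ) : ℝ)
      = ((n:ℕ):ℝ) + (nn j : ℝ) := by exact_mod_cast congrArg (Nat.cast : ℕ → ℝ) hmd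
  set c : ℕ := ((n:ℕ) + nn j) / N with hc
  set m : ℕ := ((n:ℕ) + nn j) % N with hm
  have hA1 : A j ((s + (m:ℝ)) * Δ) = A j (-t0 + (nn j : ℝ) * Δ) := by
    have hp := periodic_zsmul (hper j) (1 - (c:ℤ)) (-t0 + (nn j:ℝ)*Δ)
    rw [← hp]
    have harg : (s + (m:ℝ)) * Δ = -t0 + (nn j:ℝ)*Δ + ((1 - (c:ℤ) : ℤ) : ℝ) * ((N:ℝ) * Δ) := by
      rw [ht0]
      push_cast
      linear_combination Δ * hmr
    rw [harg]
  have hx1 : ∀ i', x (((N:ℝ) - (m:ℝ) - s) * Δ) i' = μ ^ (c:ℤ) * x (t0 - (nn j:ℝ)*Δ) i' := by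
    intro i'
    have hf := floquet_zpow hμ hfl (c:ℤ) (t0 - (nn j:ℝ)*Δ) i'
    rw [← hf]
    have harg : ((N:ℝ) - (m:ℝ) - s) * Δ = t0 - (nn j:ℝ)*Δ + ((c:ℤ) : ℝ) * ((N:ℝ) * Δ) := by
      rw [ht0]
      push_cast
      linear_combination -Δ * hmr
    rw [harg]
  have hterm : ∀ i' : Fin d, (((A j ((s + (m:ℝ))*Δ)) i' i : ℂ)) * x (((N:ℝ) - (m:ℝ) - s) * Δ) i'
      = μ^((c:ℕ):ℤ) * ((((A j (-t0 + (nn j:ℝ)*Δ)) i' i : ℂ)) * x (t0 - (nn j:ℝ)*Δ) i') := by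
    intro i'
    rw [hA1, hx1]
    ring
  rw [Finset.sum_congr rfl (fun i' _ => hterm i'), ← Finset.mul_sum, ← mul_assoc,
    zpow_neg, inv_mul_cancel₀ (zpow_ne_zero _ hμ), one_mul]

lemma entries_bound (d h : ℕ) (T : ℝ) (hT : 0 < T)
    (A : Fin (h+1) → ℝ → Matrix (Fin d) (Fin d) ℝ)
    (hA : ∀ j, Continuous (A j))
    (hper : ∀ j t, A j (t + T) = A j t) :
    ∃ C : ℝ, 0 ≤ C ∧ ∀ (j : Fin (h+1)) (t : ℝ) (i i' : Fin d), |A j t i i'| ≤ C := by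
  set F : ℝ → ℝ := fun t => ∑ j : Fin (h+1), ∑ i : Fin d, ∑ i' : Fin d, |A j t i i'| with hF
  have hFc : Continuous F := by
    apply continuous_finset_sum
    intro j _
    apply continuous_finset_sum
    intro i _
    apply continuous_finset_sum
    intro i' _
    exact ((continuous_apply i').comp ((continuous_apply i).comp (hA j))).abs
  have hFper : Function.Periodic F T := by
    intro t
    simp only [hF, hper]
  have hFnonneg : ∀ t, 0 ≤ F t := by
    intro t
    apply Finset.sum_nonneg; intro j _
    apply Finset.sum_nonneg; intro i _
    apply Finset.sum_nonneg; intro i' _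
    exact abs_nonneg _
  obtain ⟨t₀, ht₀, hmax⟩ := isCompact_Icc.exists_isMaxOn (Set.nonempty_Icc.2 (le_of_lt hT))
    hFc.continuousOn
  refine ⟨F t₀, hFnonneg t₀, fun j t i i' => ?_⟩
  have hle : F t ≤ F t₀ := by
    obtain ⟨y, hy, hFy⟩ := hFper.exists_mem_Ico₀ hT t
    rw [hFy]
    exact hmax (Set.Ico_subset_Icc_self hy)
  refine le_trans ?_ hle
  calc |A j t i i'| ≤ ∑ i' : Fin d, |A j t i i'| :=
        Finset.single_le_sum (f := fun i' => |A j t i i'|)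
          (fun k _ => abs_nonneg _) (Finset.mem_univ i')
    _ ≤ ∑ i : Fin d, ∑ i' : Fin d, |A j t i i'| :=
        Finset.single_le_sum (f := fun i => ∑ i' : Fin d, |A j t i i'|)
          (fun k _ => Finset.sum_nonneg fun _ _ => abs_nonneg _) (Finset.mem_univ i)
    _ ≤ F t := Finset.single_le_sum (f := fun j => ∑ i : Fin d, ∑ i' : Fin d, |A j t i i'|)
          (fun k _ => Finset.sum_nonneg fun _ _ => Finset.sum_nonneg fun _ _ => abs_nonneg _)
          (Finset.mem_univ j)

private lemma ite_sub_zero {c : Prop} [Decidable c] (p q : ℂ) :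
    (if c then p - q else 0) = (if c then p else 0) - (if c then q else 0) := by
  split <;> simp

lemma AopT_sub (d h N : ℕ) (hN : 0 < N) (Δ : ℝ)
    (A : Fin (h+1) → ℝ → Matrix (Fin d) (Fin d) ℝ) (nn : Fin (h+1) → ℕ)
    (s : ℝ) (μ : ℂ) (y z : Fin N → Fin d → ℂ) (n : Fin N) (i : Fin d) :
    AopT d h N hN Δ A nn s μ y n i - AopT d h N hN Δ A nn s μ z n i
      = AopT d h N hN Δ A nn s μ (fun m i' => y m i' - z m i') n i := by
  unfold AopT
  rw [← mul_sub, ← Finset.sum_sub_distrib]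
  congr 1
  refine Finset.sum_congr rfl (fun m _ => ?_)
  rw [← Finset.sum_sub_distrib]
  refine Finset.sum_congr rfl (fun j _ => ?_)
  rw [← ite_sub_zero]
  congr 1
  rw [← mul_sub, ← Finset.sum_sub_distrib]
  congr 1
  refine Finset.sum_congr rfl (fun i' _ => ?_)
  ring

lemma AopT_norm_le (d h N : ℕ) (hN : 0 < N) (Δ : ℝ)
    (A : Fin (h+1) → ℝ → Matrix (Fin d) (Fin d) ℝ) (nn : Fin (h+1) → ℕ)
    (s : ℝ) (μ : ℂ) (C : ℝ) (hC0 : 0 ≤ C)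
    (hC : ∀ (j : Fin (h+1)) (t : ℝ) (i i' : Fin d), |A j t i i'| ≤ C)
    (w : Fin N → Fin d → ℂ) (n : Fin N) (i : Fin d) :
    ‖AopT d h N hN Δ A nn s μ w n i‖ ≤
      |Δ| * (∑ m : Fin N, ∑ j : Fin (h+1), ‖μ ^ aExp N (((m:ℕ):ℤ) + 1 - (nn j : ℤ))‖)
        * ((d : ℝ) * C * ‖w‖) := by
  have hw : ∀ (m : Fin N) (i' : Fin d), ‖w m i'‖ ≤ ‖w‖ :=
    fun m i' => le_trans (norm_le_pi_norm (w m) i') (norm_le_pi_norm w m)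
  have hw0 : (0:ℝ) ≤ ‖w‖ := norm_nonneg _
  unfold AopT
  rw [norm_mul, Complex.norm_real, Real.norm_eq_abs, mul_assoc]
  apply mul_le_mul_of_nonneg_left _ (abs_nonneg Δ)
  calc ‖∑ m : Fin N, ∑ j : Fin (h+1), _‖
      ≤ ∑ m : Fin N, ∑ j : Fin (h+1),
          ‖if n = bIdx N hN (((m : ℕ) : ℤ) + 1 - (nn j : ℤ)) then
            μ ^ aExp N (((m : ℕ) : ℤ) + 1 - (nn j : ℤ)) *
              ∑ i' : Fin d, ((A j ((s + ((m : ℕ) : ℝ)) * Δ)) i' i : ℂ) * w m i'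
          else 0‖ := norm_sum_le_of_le _ (fun m _ => norm_sum_le _ _)
    _ ≤ ∑ m : Fin N, ∑ j : Fin (h+1),
          ‖μ ^ aExp N (((m:ℕ):ℤ) + 1 - (nn j : ℤ))‖ * ((d:ℝ) * C * ‖w‖) := by
        refine Finset.sum_le_sum (fun m _ => Finset.sum_le_sum (fun j _ => ?_))
        split
        · rw [norm_mul]
          apply mul_le_mul_of_nonneg_left _ (norm_nonneg _)
          calc ‖∑ i' : Fin d, ((A j ((s + ((m : ℕ) : ℝ)) * Δ)) i' i : ℂ) * w m i'‖
              ≤ ∑ i' : Fin d, ‖((A j ((s + ((m : ℕ) : ℝ)) * Δ)) i' i : ℂ) * w m i'‖ :=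
                norm_sum_le _ _
            _ ≤ ∑ _i' : Fin d, C * ‖w‖ := by
                refine Finset.sum_le_sum (fun i' _ => ?_)
                rw [norm_mul, Complex.norm_real, Real.norm_eq_abs]
                exact mul_le_mul (hC j _ i' i) (hw m i') (norm_nonneg _) hC0
            _ = (d:ℝ) * C * ‖w‖ := by
                rw [Finset.sum_const, Finset.card_univ, Fintype.card_fin, nsmul_eq_mul]
                ring
        · rw [norm_zero]
          positivity
    _ = (∑ m : Fin N, ∑ j : Fin (h+1), ‖μ ^ aExp N (((m:ℕ):ℤ) + 1 - (nn j : ℤ))‖)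
          * ((d:ℝ) * C * ‖w‖) := by
        rw [Finset.sum_mul]
        exact Finset.sum_congr rfl fun m _ => by rw [Finset.sum_mul]

lemma ode_backward_uniq (d h N : ℕ) (hN : 0 < N) (Δ : ℝ) (hΔ : 0 < Δ)
    (A : Fin (h+1) → ℝ → Matrix (Fin d) (Fin d) ℝ)
    (hA : ∀ j, Continuous (A j))
    (hper : ∀ j t, A j (t + (N : ℝ) * Δ) = A j t)
    (nn : Fin (h+1) → ℕ) (μ : ℂ)
    (f g : ℝ → (Fin N → Fin d → ℂ))
    (hf : ∀ s ∈ Set.Icc (0:ℝ) 1,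
      HasDerivAt f (fun n i => -(AopT d h N hN Δ A nn s μ (f s) n i)) s)
    (hg : ∀ s ∈ Set.Icc (0:ℝ) 1,
      HasDerivAt g (fun n i => -(AopT d h N hN Δ A nn s μ (g s) n i)) s)
    (h1 : f 1 = g 1) : ∀ s ∈ Set.Icc (0:ℝ) 1, f s = g s := by
  obtain ⟨C, hC0, hC⟩ := entries_bound d h ((N:ℝ) * Δ)
    (by positivity) A hA hper
  set K₀ : ℝ := |Δ| * (∑ m : Fin N, ∑ j : Fin (h+1),
    ‖μ ^ aExp N (((m:ℕ):ℤ) + 1 - (nn j : ℤ))‖) * ((d : ℝ) * C) with hK₀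
  have hK₀0 : 0 ≤ K₀ := by
    apply mul_nonneg (mul_nonneg (abs_nonneg _) ?_) (by positivity)
    exact Finset.sum_nonneg fun _ _ => Finset.sum_nonneg fun _ _ => norm_nonneg _
  set V : ℝ → (Fin N → Fin d → ℂ) → (Fin N → Fin d → ℂ) :=
    fun t y => fun n i => -(AopT d h N hN Δ A nn t μ y n i) with hV
  have hlip : ∀ t : ℝ, LipschitzOnWith K₀.toNNReal (V t)
      (Set.univ : Set (Fin N → Fin d → ℂ)) := by
    intro t
    apply LipschitzOnWith.of_dist_le_mul
    intro y _ z _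
    rw [dist_eq_norm, dist_eq_norm]
    have hKnn : (K₀.toNNReal : ℝ) = K₀ := Real.coe_toNNReal _ hK₀0
    rw [hKnn]
    have hnz : (0:ℝ) ≤ K₀ * ‖y - z‖ := mul_nonneg hK₀0 (norm_nonneg _)
    rw [pi_norm_le_iff_of_nonneg hnz]
    intro n
    rw [pi_norm_le_iff_of_nonneg hnz]
    intro i
    have hcomp : (V t y - V t z) n i
        = -(AopT d h N hN Δ A nn t μ (fun m i' => y m i' - z m i') n i) := by
      show V t y n i - V t z n i = _
      show -(AopT d h N hN Δ A nn t μ y n i) - -(AopT d h N hN Δ A nn t μ z n i) = _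
      rw [← AopT_sub]
      ring
    rw [hcomp, norm_neg]
    have hb := AopT_norm_le d h N hN Δ A nn t μ C hC0 hC
      (fun m i' => y m i' - z m i') n i
    refine le_trans hb ?_
    have hyz : ‖(fun m i' => y m i' - z m i')‖ = ‖y - z‖ := rfl
    rw [hyz, hK₀]
    exact le_of_eq (by ring)
  have := ODE_solution_unique_of_mem_Icc_left (v := V)
    (s := fun _ => (Set.univ : Set (Fin N → Fin d → ℂ))) (K := K₀.toNNReal)
    (f := f) (g := g) (a := 0) (b := 1) (fun t _ => hlip t)
    (fun s hs => ((hf s hs).continuousAt.continuousWithinAt))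
    (fun s hs => ((hf s (Set.Ioc_subset_Icc_self hs)).hasDerivWithinAt))
    (fun _ _ => trivial)
    (fun s hs => ((hg s hs).continuousAt.continuousWithinAt))
    (fun s hs => ((hg s (Set.Ioc_subset_Icc_self hs)).hasDerivWithinAt))
    (fun _ _ => trivial) h1
  exact fun s hs => this hs


/-- **Theorem 4.3, forward direction.** If `x` is a Floquet solution of the transposed
system with multiplier `μ ≠ 0`, then `v_n = x((N-n)Δ)` is nonzero and satisfies
`M(μ)v = 0`: every solution of `p' = -A(s,μ)ᵀ p` on `[0,1]` with `p(1) = v` satisfies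
`p(0) = B(μ)ᵀ v`. -/
theorem transposed_eigenfunction_to_nleig
    (d h N : ℕ) (hd : 0 < d) (hN : 0 < N) (Δ : ℝ) (hΔ : 0 < Δ)
    (A : Fin (h+1) → ℝ → Matrix (Fin d) (Fin d) ℝ)
    (hA : ∀ j, Continuous (A j))
    (hper : ∀ j t, A j (t + (N : ℝ) * Δ) = A j t)
    (nn : Fin (h+1) → ℕ) (hn0 : nn 0 = 0)
    (hmono : ∀ i j : Fin (h+1), 1 ≤ (i : ℕ) → i < j → nn i < nn j)
    (μ : ℂ) (hμ : μ ≠ 0)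
    (x : ℝ → Fin d → ℂ)
    (hx : IsFloquetSolutionT d h A nn Δ ((N : ℝ) * Δ) μ x) :
    (fun (n : Fin N) (i : Fin d) => x (((N : ℝ) - (((n : ℕ) : ℝ) + 1)) * Δ) i) ≠ 0 ∧
    (∀ p : ℝ → Fin N → Fin d → ℂ,
      (∀ s ∈ Set.Icc (0:ℝ) 1,
        HasDerivAt p (fun n i => -(AopT d h N hN Δ A nn s μ (p s) n i)) s) →
      p 1 = (fun (n : Fin N) (i : Fin d) => x (((N : ℝ) - (((n : ℕ) : ℝ) + 1)) * Δ) i) →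
      p 0 = BopT d N hN μ
        (fun (n : Fin N) (i : Fin d) => x (((N : ℝ) - (((n : ℕ) : ℝ) + 1)) * Δ) i)) := by
  obtain ⟨⟨tnz, hnz⟩, hx', hfl⟩ := hx
  set q : ℝ → Fin N → Fin d → ℂ :=
    fun s n i => x (((N:ℝ) - ((n:ℕ):ℝ) - s) * Δ) i with hqdef
  have hqd : ∀ s ∈ Set.Icc (0:ℝ) 1,
      HasDerivAt q (fun n i => -(AopT d h N hN Δ A nn s μ (q s) n i)) s :=
    fun s _ => q_hasDerivAt d h N hN Δ A hper nn μ hμ x hx' hfl s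
  have hq1 : q 1 = (fun (n : Fin N) (i : Fin d) =>
      x (((N : ℝ) - (((n : ℕ) : ℝ) + 1)) * Δ) i) := by
    funext n i
    show x (((N:ℝ) - ((n:ℕ):ℝ) - 1) * Δ) i = _
    have harg : ((N:ℝ) - ((n:ℕ):ℝ) - 1) * Δ = ((N : ℝ) - (((n : ℕ) : ℝ) + 1)) * Δ := by ring
    rw [harg]
  have hq0 : q 0 = BopT d N hN μ (fun (n : Fin N) (i : Fin d) =>
      x (((N : ℝ) - (((n : ℕ) : ℝ) + 1)) * Δ) i) := by
    funext n i
    show x (((N:ℝ) - ((n:ℕ):ℝ) - 0) * Δ) i = _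
    unfold BopT
    split
    · next hn =>
      have hc : (((((n:ℕ) - 1 : ℕ)) : ℝ) + 1) = ((n:ℕ):ℝ) := by
        have : 1 ≤ (n:ℕ) := hn
        push_cast [Nat.cast_sub this]
        ring
      show _ = x (((N:ℝ) - ((((n:ℕ) - 1 : ℕ) : ℝ) + 1)) * Δ) i
      rw [hc]
      congr 1
      ring
    · next hn =>
      have hn0 : (n:ℕ) = 0 := by omega
      have hc : ((((N - 1 : ℕ)) : ℝ) + 1) = (N:ℝ) := by
        have : 1 ≤ N := hN
        push_cast [Nat.cast_sub this]
        ring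
      show _ = μ * x (((N:ℝ) - (((N - 1 : ℕ) : ℝ) + 1)) * Δ) i
      rw [hc, hn0]
      have h2 : ((N:ℝ) - ((0:ℕ):ℝ) - 0) * Δ = 0 + (N:ℝ) * Δ := by push_cast; ring
      have h3 : ((N:ℝ) - (N:ℝ)) * Δ = 0 := by ring
      rw [h2, h3, hfl 0]
  constructor
  · intro hv0
    have hz1 : q 1 = (fun _ _ => (0:ℂ)) := by
      rw [hq1]
      exact hv0
    have hzero_deriv : ∀ s ∈ Set.Icc (0:ℝ) 1,
        HasDerivAt (fun _ : ℝ => (fun _ _ => (0:ℂ)) : ℝ → Fin N → Fin d → ℂ)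
          (fun n i => -(AopT d h N hN Δ A nn s μ (fun _ _ => (0:ℂ)) n i)) s := by
      intro s _
      have h0 : (fun (n : Fin N) (i : Fin d) => -(AopT d h N hN Δ A nn s μ (fun _ _ => (0:ℂ)) n i))
          = (fun _ _ => (0:ℂ)) := by
        funext n i
        simp [AopT]
      rw [h0]
      exact hasDerivAt_const s _
    have hzz := ode_backward_uniq d h N hN Δ hΔ A hA hper nn μ q (fun _ => fun _ _ => (0:ℂ))
      hqd hzero_deriv hz1
    -- x vanishes on [0, N]·Δ
    have hgrid : ∀ u : ℝ, 0 ≤ u → u ≤ (N:ℝ) → ∀ i, x (u * Δ) i = 0 := by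
      intro u hu0 huN i
      set w : ℝ := (N:ℝ) - u with hw
      have hw0 : 0 ≤ w := by simp [hw]; linarith
      rcases lt_or_ge w (N:ℝ) with hlt | hge
      · have hn₀ : (⌊w⌋₊ : ℕ) < N := by
          rw [Nat.floor_lt hw0] at *
          exact_mod_cast hlt
        have hs0 : 0 ≤ w - (⌊w⌋₊:ℝ) := by
          have := Nat.floor_le hw0
          linarith
        have hs1 : w - (⌊w⌋₊:ℝ) ≤ 1 := by
          have := Nat.lt_floor_add_one w
          linarith
        have hthis := congrFun (congrFun (hzz (w - (⌊w⌋₊:ℝ)) ⟨hs0, hs1⟩) ⟨⌊w⌋₊, hn₀⟩) i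
        simp only [hqdef] at hthis
        have harg : ((N:ℝ) - ((⌊w⌋₊:ℕ):ℝ) - (w - (⌊w⌋₊:ℝ))) * Δ = u * Δ := by
          rw [hw]; ring
        rw [harg] at hthis
        exact hthis
      · -- w = N, u = 0
        have hwN : w = (N:ℝ) := le_antisymm (by simp [hw]; linarith) hge
        have hu : u = 0 := by rw [hw] at hwN; linarith
        have hn₀ : N - 1 < N := by omega
        have hthis := congrFun (congrFun (hzz 1 ⟨zero_le_one, le_refl 1⟩) ⟨N - 1, hn₀⟩) i
        simp only [hqdef] at hthis
        have hc : ((N - 1 : ℕ) : ℝ) = (N:ℝ) - 1 := by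
          have h1N : 1 ≤ N := hN
          push_cast [Nat.cast_sub h1N]
          ring
        have harg : ((N:ℝ) - ((N-1:ℕ):ℝ) - 1) * Δ = u * Δ := by
          rw [hc, hu]; ring
        rw [harg] at hthis
        exact hthis
    have htot : ∀ t : ℝ, ∀ i, x t i = 0 := by
      intro t i
      set T : ℝ := (N:ℝ) * Δ with hT
      have hT0 : 0 < T := by positivity
      set k : ℤ := ⌊t / T⌋ with hk
      set u' : ℝ := t - (k:ℝ) * T with hu'
      have hu'0 : 0 ≤ u' := by
        have h1 : (k:ℝ) ≤ t / T := Int.floor_le _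
        have h2 : (k:ℝ) * T ≤ (t / T) * T := mul_le_mul_of_nonneg_right h1 (le_of_lt hT0)
        rw [div_mul_cancel₀ _ (ne_of_gt hT0)] at h2
        simp [hu']; linarith
      have hu'T : u' < T := by
        have h1 : t / T < (k:ℝ) + 1 := Int.lt_floor_add_one _
        have h2 : (t / T) * T < ((k:ℝ) + 1) * T := mul_lt_mul_of_pos_right h1 hT0
        rw [div_mul_cancel₀ _ (ne_of_gt hT0)] at h2
        simp [hu']; linarith [h2]
      have hx_u' : ∀ i, x u' i = 0 := by
        intro i
        have hdiv0 : 0 ≤ u' / Δ := div_nonneg hu'0 (le_of_lt hΔ)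
        have hdivN : u' / Δ ≤ (N:ℝ) := by
          rw [div_le_iff₀ hΔ]
          rw [hT] at hu'T
          linarith
        have := hgrid (u' / Δ) hdiv0 hdivN i
        rwa [div_mul_cancel₀ _ (ne_of_gt hΔ)] at this
      have := floquet_zpow hμ hfl k u' i
      have harg : u' + (k:ℝ) * T = t := by rw [hu']; ring
      rw [harg] at this
      rw [this, hx_u' i, mul_zero]
    apply hnz
    funext i
    exact htot tnz i
  · intro p hp hp1
    have h1 : p 1 = q 1 := by rw [hp1, hq1]
    have := ode_backward_uniq d h N hN Δ hΔ A hA hper nn μ p q hp hqd h1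
      0 ⟨le_refl 0, zero_le_one⟩
    rw [this, hq0]
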